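/- Fix q ≥ 1, d ≥ 2, and let θ ∈ [0, 2π]. Suppose μ > 0 satisfies μ^{s₁}·sin(qθ) - μ^{q d₁}·sin((s₁/d₁)θ - 2πr/d) - sin((q - s₁/d₁)θ + 2πr/d) = 0 evaluated at μ = 1 and θ = 2πp/q, where qr - ps = 1, δ = gcd(d,s), s = s₁δ, d = d₁δ. Then implicit differentiation of this equation gives: the derivative ∂μ/∂θ at θ = 2πp/q (with μ(2πp/q) = 1) satisfies (∂μ/∂θ)·sin(2π/(qd)) = (1/d₁)·(cos(2π/(qd)) - 1). Consequently, for ρ(θ) = μ(θ)^{d₁}, one has (∂ρ/∂θ)|_{θ=2πp/q}·sin(2π/(qd)) = cos(2π/(qd)) - 1. -/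

import Mathlib

open Real

/-- Implicit differentiation of the defining equation of μ at
θ₀ = 2πp/q with μ(θ₀) = 1 yields
(∂μ/∂θ)·sin(2π/(qd)) = (1/d₁)(cos(2π/(qd)) - 1), and consequently for
ρ = μ^{d₁} one has (∂ρ/∂θ)·sin(2π/(qd)) = cos(2π/(qd)) - 1. -/
theorem deriv_at_arc_endpoint (q d p r s δ s₁ d₁ : ℕ)
    (hq : 1 ≤ q) (hd : 2 ≤ d)
    (hfarey : (q : ℤ) * r - (p : ℤ) * s = 1)
    (hδ : δ = Nat.gcd d s) (hs : s = s₁ * δ) (hd1 : d = d₁ * δ)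
    (μ : ℝ → ℝ)
    (hdiff : DifferentiableAt ℝ μ (2 * π * p / q))
    (hμ : μ (2 * π * p / q) = 1)
    (heq : ∀ᶠ θ in nhds (2 * π * p / q),
      (μ θ) ^ s₁ * Real.sin ((q : ℝ) * θ)
        - (μ θ) ^ (q * d₁) * Real.sin ((s₁ : ℝ) / (d₁ : ℝ) * θ - 2 * π * r / d)
        - Real.sin (((q : ℝ) - (s₁ : ℝ) / (d₁ : ℝ)) * θ + 2 * π * r / d) = 0) :
    deriv μ (2 * π * p / q) * Real.sin (2 * π / (q * d))
        = (1 / (d₁ : ℝ)) * (Real.cos (2 * π / (q * d)) - 1) ∧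
      deriv (fun θ => (μ θ) ^ d₁) (2 * π * p / q) * Real.sin (2 * π / (q * d))
        = Real.cos (2 * π / (q * d)) - 1 := by
  have hq0 : (q : ℝ) ≠ 0 := Nat.cast_ne_zero.mpr (by omega)
  have hd0 : (d : ℝ) ≠ 0 := Nat.cast_ne_zero.mpr (by omega)
  have hδn : δ ≠ 0 := by rintro rfl; omega
  have hd₁n : d₁ ≠ 0 := by rintro rfl; omega
  have hd₁0 : (d₁ : ℝ) ≠ 0 := Nat.cast_ne_zero.mpr hd₁n
  set θ₀ : ℝ := 2 * π * p / q with hθ₀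
  set A : ℝ := 2 * π / (q * d) with hA
  set m : ℝ := deriv μ θ₀ with hm
  have hμ' : HasDerivAt μ m θ₀ := hdiff.hasDerivAt
  have hcast : (q : ℝ) * r - (p : ℝ) * s = 1 := by exact_mod_cast hfarey
  have hsd : (s₁ : ℝ) / d₁ = (s : ℝ) / d := by
    rw [div_eq_div_iff hd₁0 hd0]
    have : (s : ℝ) = s₁ * δ := by exact_mod_cast congrArg (Nat.cast : ℕ → ℝ) hs
    have h2 : (d : ℝ) = d₁ * δ := by exact_mod_cast congrArg (Nat.cast : ℕ → ℝ) hd1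
    rw [this, h2]; ring
  have hqθ : (q : ℝ) * θ₀ = 2 * π * p := by
    rw [hθ₀]; field_simp
  have hsin0 : Real.sin ((q : ℝ) * θ₀) = 0 := by
    rw [hqθ]
    have : 2 * π * (p : ℝ) = (2 * p : ℕ) * π := by push_cast; ring
    rw [this, Real.sin_nat_mul_pi]
  have hcos1 : Real.cos ((q : ℝ) * θ₀) = 1 := by
    rw [hqθ]
    have : 2 * π * (p : ℝ) = (p : ℕ) * (2 * π) := by push_cast; ring
    rw [this, Real.cos_nat_mul_two_pi]
  have key1 : (s₁ : ℝ) / d₁ * θ₀ - 2 * π * r / d = -A := by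
    rw [hsd, hθ₀, hA]
    field_simp
    linear_combination (-1 : ℝ) * hcast
  have key2 : ((q : ℝ) - (s₁ : ℝ) / d₁) * θ₀ + 2 * π * r / d = A + p * (2 * π) := by
    rw [hsd, hθ₀, hA]
    field_simp
    linear_combination hcast
  -- derivative of the full expression
  have h1 : HasDerivAt (fun θ : ℝ => (μ θ) ^ s₁) ((s₁ : ℝ) * (μ θ₀) ^ (s₁ - 1) * m) θ₀ :=
    hμ'.pow s₁
  have h2 : HasDerivAt (fun θ : ℝ => Real.sin ((q : ℝ) * θ))
      (Real.cos ((q : ℝ) * θ₀) * ((q : ℝ) * 1)) θ₀ :=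
    ((hasDerivAt_id θ₀).const_mul (q : ℝ)).sin
  have h3 : HasDerivAt (fun θ : ℝ => (μ θ) ^ (q * d₁))
      (((q * d₁ : ℕ) : ℝ) * (μ θ₀) ^ (q * d₁ - 1) * m) θ₀ := hμ'.pow (q * d₁)
  have h4 : HasDerivAt (fun θ : ℝ => Real.sin ((s₁ : ℝ) / (d₁ : ℝ) * θ - 2 * π * r / d))
      (Real.cos ((s₁ : ℝ) / (d₁ : ℝ) * θ₀ - 2 * π * r / d) * ((s₁ : ℝ) / (d₁ : ℝ) * 1)) θ₀ :=
    (((hasDerivAt_id θ₀).const_mul ((s₁ : ℝ) / (d₁ : ℝ))).sub_const (2 * π * r / d)).sin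
  have h5 : HasDerivAt (fun θ : ℝ => Real.sin (((q : ℝ) - (s₁ : ℝ) / (d₁ : ℝ)) * θ + 2 * π * r / d))
      (Real.cos (((q : ℝ) - (s₁ : ℝ) / (d₁ : ℝ)) * θ₀ + 2 * π * r / d)
        * (((q : ℝ) - (s₁ : ℝ) / (d₁ : ℝ)) * 1)) θ₀ :=
    (((hasDerivAt_id θ₀).const_mul ((q : ℝ) - (s₁ : ℝ) / (d₁ : ℝ))).add_const (2 * π * r / d)).sin
  have hF : HasDerivAt (fun θ : ℝ =>
      (μ θ) ^ s₁ * Real.sin ((q : ℝ) * θ)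
        - (μ θ) ^ (q * d₁) * Real.sin ((s₁ : ℝ) / (d₁ : ℝ) * θ - 2 * π * r / d)
        - Real.sin (((q : ℝ) - (s₁ : ℝ) / (d₁ : ℝ)) * θ + 2 * π * r / d))
      (((s₁ : ℝ) * (μ θ₀) ^ (s₁ - 1) * m * Real.sin ((q : ℝ) * θ₀)
          + (μ θ₀) ^ s₁ * (Real.cos ((q : ℝ) * θ₀) * ((q : ℝ) * 1)))
        - (((q * d₁ : ℕ) : ℝ) * (μ θ₀) ^ (q * d₁ - 1) * m
              * Real.sin ((s₁ : ℝ) / (d₁ : ℝ) * θ₀ - 2 * π * r / d)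
            + (μ θ₀) ^ (q * d₁)
              * (Real.cos ((s₁ : ℝ) / (d₁ : ℝ) * θ₀ - 2 * π * r / d) * ((s₁ : ℝ) / (d₁ : ℝ) * 1)))
        - Real.cos (((q : ℝ) - (s₁ : ℝ) / (d₁ : ℝ)) * θ₀ + 2 * π * r / d)
            * (((q : ℝ) - (s₁ : ℝ) / (d₁ : ℝ)) * 1)) θ₀ :=
    ((h1.mul h2).sub (h3.mul h4)).sub h5
  have hF0 : HasDerivAt (fun _ : ℝ => (0 : ℝ))
      (((s₁ : ℝ) * (μ θ₀) ^ (s₁ - 1) * m * Real.sin ((q : ℝ) * θ₀)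
          + (μ θ₀) ^ s₁ * (Real.cos ((q : ℝ) * θ₀) * ((q : ℝ) * 1)))
        - (((q * d₁ : ℕ) : ℝ) * (μ θ₀) ^ (q * d₁ - 1) * m
              * Real.sin ((s₁ : ℝ) / (d₁ : ℝ) * θ₀ - 2 * π * r / d)
            + (μ θ₀) ^ (q * d₁)
              * (Real.cos ((s₁ : ℝ) / (d₁ : ℝ) * θ₀ - 2 * π * r / d) * ((s₁ : ℝ) / (d₁ : ℝ) * 1)))
        - Real.cos (((q : ℝ) - (s₁ : ℝ) / (d₁ : ℝ)) * θ₀ + 2 * π * r / d)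
            * (((q : ℝ) - (s₁ : ℝ) / (d₁ : ℝ)) * 1)) θ₀ :=
    hF.congr_of_eventuallyEq (heq.mono fun x hx => hx.symm)
  have hDeq :
      ((s₁ : ℝ) * (μ θ₀) ^ (s₁ - 1) * m * Real.sin ((q : ℝ) * θ₀)
          + (μ θ₀) ^ s₁ * (Real.cos ((q : ℝ) * θ₀) * ((q : ℝ) * 1)))
        - (((q * d₁ : ℕ) : ℝ) * (μ θ₀) ^ (q * d₁ - 1) * m
              * Real.sin ((s₁ : ℝ) / (d₁ : ℝ) * θ₀ - 2 * π * r / d)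
            + (μ θ₀) ^ (q * d₁)
              * (Real.cos ((s₁ : ℝ) / (d₁ : ℝ) * θ₀ - 2 * π * r / d) * ((s₁ : ℝ) / (d₁ : ℝ) * 1)))
        - Real.cos (((q : ℝ) - (s₁ : ℝ) / (d₁ : ℝ)) * θ₀ + 2 * π * r / d)
            * (((q : ℝ) - (s₁ : ℝ) / (d₁ : ℝ)) * 1) = 0 :=
    hF0.unique (hasDerivAt_const θ₀ 0)
  rw [key1, key2, hsin0, hcos1, hμ, one_pow, one_pow, Real.sin_neg, Real.cos_neg,
    Real.cos_add_nat_mul_two_pi] at hDeq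
  simp only [one_pow] at hDeq
  push_cast at hDeq
  have hDeq' : (q : ℝ) * ((d₁ : ℝ) * (m * Real.sin A)) = (q : ℝ) * (Real.cos A - 1) := by
    linear_combination hDeq
  have hmain : m * Real.sin A = 1 / d₁ * (Real.cos A - 1) := by
    have h := mul_left_cancel₀ hq0 hDeq'
    field_simp
    linear_combination h
  constructor
  · exact hmain
  · have hρ : HasDerivAt (fun θ : ℝ => (μ θ) ^ d₁)
        ((d₁ : ℝ) * (μ θ₀) ^ (d₁ - 1) * m) θ₀ := hμ'.pow d₁
    rw [hρ.deriv, hμ, one_pow, mul_one]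
    rw [mul_assoc, hmain]
    field_simp
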